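/- In the Gaussian location model, the distribution of √n(θ̂_H − θ) is the mixture {Φ(√n(−θ+η_n)) − Φ(√n(−θ−η_n))}·δ_{−√n·θ} + μ, where μ is the absolutely continuous measure with Lebesgue density x ↦ φ(x)·1(|x + √n·θ| > √n·η_n). -/

import Mathlib

open MeasureTheory ProbabilityTheory Real Filter Topology Set

noncomputable def stdGauss : Measure ℝ := gaussianReal 0 1

/-- Standard normal cdf. -/
noncomputable def Phi (x : ℝ) : ℝ := (stdGauss (Set.Iic x)).toReal

/-- Standard normal density. -/
noncomputable def phi (x : ℝ) : ℝ := gaussianPDFReal 0 1 x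

/-- Hard-thresholding estimator. -/
noncomputable def hardThresh (η y : ℝ) : ℝ := if η < |y| then y else 0

/-- Soft-thresholding (LASSO) estimator. -/
noncomputable def softThresh (η y : ℝ) : ℝ := Real.sign y * max (|y| - η) 0

/-- SCAD estimator. -/
noncomputable def scadThresh (a η y : ℝ) : ℝ :=
  if |y| ≤ 2 * η then Real.sign y * max (|y| - η) 0
  else if |y| ≤ a * η then ((a - 1) * y - Real.sign y * a * η) / (a - 2)
  else y
instance : IsProbabilityMeasure stdGauss := by unfold stdGauss; infer_instance

instance : NullSingletonClass stdGauss :=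
  ⟨fun x => (gaussianReal_absolutelyContinuous 0 one_ne_zero) (measure_singleton x)⟩


theorem stmt_10 (θ η : ℝ) (hη : 0 < η) (n : ℕ) (hn : 0 < n) :
    Measure.map (fun z => Real.sqrt n * (hardThresh η (θ + z / Real.sqrt n) - θ)) stdGauss
      = ENNReal.ofReal (Phi (Real.sqrt n * (-θ + η)) - Phi (Real.sqrt n * (-θ - η)))
          • Measure.dirac (-(Real.sqrt n * θ))
        + volume.withDensity (fun x => ENNReal.ofReal
            (if Real.sqrt n * η < |x + Real.sqrt n * θ| then phi x else 0)) := by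
  set s := Real.sqrt n with hs_def
  have hs : 0 < s := Real.sqrt_pos.mpr (by exact_mod_cast hn)
  have hfun : (fun z : ℝ => s * (hardThresh η (θ + z / s) - θ))
      = fun z => if s * η < |z + s * θ| then z else -(s * θ) := by
    funext z
    have h1 : s * (θ + z / s) = z + s * θ := by field_simp; ring
    have h2 : (η < |θ + z / s|) ↔ (s * η < |z + s * θ|) := by
      rw [← h1, abs_mul, abs_of_pos hs]
      exact (mul_lt_mul_iff_right₀ hs).symm
    simp only [hardThresh]
    split_ifs with h h' h'
    · rw [mul_sub, h1]; ring
    · exact absurd (h2.mp h) h'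
    · exact absurd (h2.mpr h') h
    · ring
  rw [hfun]
  set T : Set ℝ := {z | s * η < |z + s * θ|} with hT_def
  have hT : MeasurableSet T :=
    measurableSet_lt measurable_const ((measurable_id.add_const _).abs)
  have hf : Measurable (fun z : ℝ => if s * η < |z + s * θ| then z else -(s * θ)) :=
    Measurable.ite hT measurable_id measurable_const
  -- key lemma 1 : the compl is an Icc
  have hTc : Tᶜ = Icc (s * (-θ - η)) (s * (-θ + η)) := by
    ext z
    simp only [hT_def, mem_compl_iff, mem_setOf_eq, not_lt, mem_Icc, abs_le]
    constructor
    · rintro ⟨h1, h2⟩; constructor <;> nlinarith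
    · rintro ⟨h1, h2⟩; constructor <;> nlinarith
  have hab : s * (-θ - η) ≤ s * (-θ + η) := by nlinarith
  have hIic : Iic (s * (-θ - η)) ⊆ Iic (s * (-θ + η)) := Iic_subset_Iic.mpr hab
  have hfin : stdGauss (Iic (s * (-θ + η))) ≠ ⊤ := measure_ne_top _ _
  have hle : stdGauss (Iic (s * (-θ - η))) ≤ stdGauss (Iic (s * (-θ + η))) :=
    measure_mono hIic
  have hK1 : stdGauss Tᶜ
      = ENNReal.ofReal (Phi (s * (-θ + η)) - Phi (s * (-θ - η))) := by
    rw [hTc, Phi, Phi, ← ENNReal.toReal_sub_of_le hle hfin,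
      ENNReal.ofReal_toReal (by exact (tsub_le_self.trans_lt hfin.lt_top).ne),
      ← measure_diff hIic measurableSet_Iic.nullMeasurableSet (measure_ne_top _ _),
      Iic_sdiff_Iic, ← measure_congr (Ioc_ae_eq_Icc (μ := stdGauss))]
  -- key lemma 2 : density identity
  have hdens : (fun x => ENNReal.ofReal (if s * η < |x + s * θ| then phi x else 0))
      = T.indicator (gaussianPDF 0 1) := by
    funext x
    by_cases hx : s * η < |x + s * θ|
    · simp [hx, Set.indicator_of_mem (by exact hx : x ∈ T), gaussianPDF, phi]
    · simp [hx, Set.indicator_of_notMem (by exact hx : x ∉ T)]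
  ext A hA
  rw [Measure.map_apply hf hA, Measure.add_apply, Measure.smul_apply, smul_eq_mul,
    Measure.dirac_apply' _ hA, withDensity_apply _ hA, hdens,
    setLIntegral_indicator hT]
  have hK2 : stdGauss (A ∩ T) = ∫⁻ x in T ∩ A, gaussianPDF 0 1 x := by
    rw [Set.inter_comm, stdGauss, gaussianReal_apply 0 one_ne_zero]
  by_cases hc : -(s * θ) ∈ A
  · have hpre : (fun z : ℝ => if s * η < |z + s * θ| then z else -(s * θ)) ⁻¹' A
        = (A ∩ T) ∪ Tᶜ := by
      ext z
      by_cases hz : s * η < |z + s * θ| <;>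
        simp [mem_preimage, hz, hT_def, hc]
    rw [hpre, measure_union (Disjoint.mono_left (inter_subset_right) disjoint_compl_right)
      hT.compl, hK1, hK2, indicator_of_mem hc]
    simp [add_comm]
  · have hpre : (fun z : ℝ => if s * η < |z + s * θ| then z else -(s * θ)) ⁻¹' A
        = A ∩ T := by
      ext z
      by_cases hz : s * η < |z + s * θ| <;>
        simp [mem_preimage, hz, hT_def, hc, and_comm]
    rw [hpre, hK2, indicator_of_notMem hc]
    simp
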